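/- Let φ: ℱ→𝒢 be a morphism of forts of length ℓ, let 1≤i<ℓ, and let 𝒞 be an integer cell of π_i(ℱ). Then for every two points x,x′∈𝒞 the fiber morphisms φ_x := φ(x,·): ℱ(𝒞)→𝒢_{φ_{1…i}(x)} and φ_{x′} := φ(x′,·): ℱ(𝒞)→𝒢_{φ_{1…i}(x′)} are morphisms between the same pair of forts and are combinatorially equivalent. (Here φ_{1…i}(x) and φ_{1…i}(x′) lie in the same integer cell 𝒞″ of π_i(𝒢), so both targets equal 𝒢(𝒞″).) -/
import Mathlib


open Set

namespace Forts

/-- An integer cell of length 1: a singleton `{k}` or an open interval `(k, k+1)`, `k : ℤ`. -/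
def Cell1 (S : Set ℝ) : Prop :=
  ∃ k : ℤ, S = {(k : ℝ)} ∨ S = Set.Ioo (k : ℝ) ((k : ℝ) + 1)

/-- An integer cell of length ℓ: a product of ℓ integer cells of length 1. -/
def Cell {ℓ : ℕ} (S : Set (Fin ℓ → ℝ)) : Prop :=
  ∃ c : Fin ℓ → Set ℝ, (∀ i, Cell1 (c i)) ∧ S = {x | ∀ i, x i ∈ c i}

/-- `cellsOf S` is the collection of integer cells contained in `S`. -/
def cellsOf {ℓ : ℕ} (S : Set (Fin ℓ → ℝ)) : Set (Set (Fin ℓ → ℝ)) :=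
  {C | Cell C ∧ C ⊆ S}

/-- Forts, defined inductively along the first coordinate: a fort of length 1 is an
interval `(0, n)` with `n ≥ 1`; given a fort `F1` of length 1 and an assignment `s` of a
fort of length ℓ to each integer cell of `F1`, the set `F1 ⋉ s = ⋃_{C ∈ C(F1)} C × s(C)`
is a fort of length `ℓ + 1`. -/
inductive Fort : (ℓ : ℕ) → Set (Fin ℓ → ℝ) → Prop
  | base (n : ℕ) (hn : 0 < n) : Fort 1 {x : Fin 1 → ℝ | x 0 ∈ Set.Ioo (0 : ℝ) (n : ℝ)}
  | step {ℓ : ℕ} (F1 : Set (Fin 1 → ℝ)) (s : Set (Fin 1 → ℝ) → Set (Fin ℓ → ℝ))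
      (hF1 : Fort 1 F1) (hs : ∀ C ∈ cellsOf F1, Fort ℓ (s C)) :
      Fort (ℓ + 1)
        {x : Fin (ℓ + 1) → ℝ | ∃ C ∈ cellsOf F1, (fun _ : Fin 1 => x 0) ∈ C ∧ Fin.tail x ∈ s C}

/-- A map between subsets of ℝ^ℓ is precellular if each coordinate function depends only on
the first `i` coordinates and is strictly increasing in the `i`-th coordinate. -/
def Precellular {ℓ : ℕ} (X : Set (Fin ℓ → ℝ)) (f : (Fin ℓ → ℝ) → (Fin ℓ → ℝ)) : Prop :=
  (∀ i : Fin ℓ, ∀ x ∈ X, ∀ y ∈ X, (∀ j : Fin ℓ, j ≤ i → x j = y j) → f x i = f y i) ∧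
  (∀ i : Fin ℓ, ∀ x ∈ X, ∀ y ∈ X, (∀ j : Fin ℓ, j < i → x j = y j) → x i < y i → f x i < f y i)

/-- A morphism of forts: surjective, precellular, maps integer cells into integer cells, and
is continuous on each integer cell. -/
def Morphism {ℓ : ℕ} (F G : Set (Fin ℓ → ℝ)) (φ : (Fin ℓ → ℝ) → (Fin ℓ → ℝ)) : Prop :=
  φ '' F = G ∧ Precellular F φ ∧
    ∀ C ∈ cellsOf F, (∃ C₂ ∈ cellsOf G, φ '' C ⊆ C₂) ∧ ContinuousOn φ C

/-- Two morphisms are combinatorially equivalent if they map each integer cell of the source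
into the same integer cell of the target. -/
def CombEquiv {ℓ : ℕ} (F G : Set (Fin ℓ → ℝ)) (φ ψ : (Fin ℓ → ℝ) → (Fin ℓ → ℝ)) : Prop :=
  ∀ C ∈ cellsOf F, ∃ C₂ ∈ cellsOf G, φ '' C ⊆ C₂ ∧ ψ '' C ⊆ C₂

/-- Projection to the first `i` coordinates. -/
def proj {ℓ : ℕ} (i : ℕ) (h : i ≤ ℓ) (x : Fin ℓ → ℝ) : Fin i → ℝ :=
  fun j => x (Fin.castLE h j)

/-- The last `ℓ - i` coordinates. -/
def tailpart {ℓ i : ℕ} (h : i ≤ ℓ) (x : Fin ℓ → ℝ) : Fin (ℓ - i) → ℝ :=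
  fun j => x ⟨i + (j : ℕ), by have := j.2; omega⟩

/-- Glue a prefix of length `i` with a suffix of length `ℓ - i`. -/
def glue {ℓ i : ℕ} (h : i ≤ ℓ) (x : Fin i → ℝ) (y : Fin (ℓ - i) → ℝ) : Fin ℓ → ℝ :=
  fun j => if hj : (j : ℕ) < i then x ⟨(j : ℕ), hj⟩
    else y ⟨(j : ℕ) - i, by have := j.2; omega⟩

/-- The fiber `X_x = {y : (x, y) ∈ X}` of `X ⊆ ℝ^ℓ` over `x ∈ ℝ^i`. -/
def fiber {ℓ i : ℕ} (h : i ≤ ℓ) (X : Set (Fin ℓ → ℝ)) (x : Fin i → ℝ) :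
    Set (Fin (ℓ - i) → ℝ) :=
  {y | glue h x y ∈ X}

end Forts

namespace Forts

/-! ### Auxiliary lemmas -/

open scoped Classical in
/-- The unique integer 1-cell containing a real number. -/
noncomputable def cell1Of (r : ℝ) : Set ℝ :=
  if ∃ k : ℤ, r = (k : ℝ) then {r} else Set.Ioo (⌊r⌋ : ℝ) ((⌊r⌋ : ℝ) + 1)

lemma mem_cell1Of (r : ℝ) : r ∈ cell1Of r := by
  unfold cell1Of
  split
  · exact rfl
  · next h =>
    refine ⟨?_, Int.lt_floor_add_one r⟩
    rcases lt_or_eq_of_le (Int.floor_le r) with h' | h'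
    · exact h'
    · exact absurd ⟨⌊r⌋, h'.symm⟩ h

lemma cell1_cell1Of (r : ℝ) : Cell1 (cell1Of r) := by
  unfold cell1Of
  split
  · next h => obtain ⟨k, hk⟩ := h; exact ⟨k, Or.inl (by rw [hk])⟩
  · exact ⟨⌊r⌋, Or.inr rfl⟩

lemma cell1_eq_of_mem {A : Set ℝ} (hA : Cell1 A) {r : ℝ} (hr : r ∈ A) : A = cell1Of r := by
  obtain ⟨k, hk | hk⟩ := hA
  · subst hk
    have : r = (k : ℝ) := hr
    subst this
    unfold cell1Of
    rw [if_pos ⟨k, rfl⟩]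
  · subst hk
    have h1 : ¬ ∃ m : ℤ, r = (m : ℝ) := by
      rintro ⟨m, rfl⟩
      have h2 : k < m := by exact_mod_cast hr.1
      have h3 : m < k + 1 := by exact_mod_cast hr.2
      omega
    have hfl : ⌊r⌋ = k := by
      rw [Int.floor_eq_iff]
      exact ⟨hr.1.le, hr.2⟩
    unfold cell1Of
    rw [if_neg h1, hfl]

/-- The integer cell containing a point. -/
def cellOf {ℓ : ℕ} (w : Fin ℓ → ℝ) : Set (Fin ℓ → ℝ) := {x | ∀ j, x j ∈ cell1Of (w j)}

lemma cell_cellOf {ℓ : ℕ} (w : Fin ℓ → ℝ) : Cell (cellOf w) :=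
  ⟨fun j => cell1Of (w j), fun j => cell1_cell1Of _, rfl⟩

lemma mem_cellOf {ℓ : ℕ} (w : Fin ℓ → ℝ) : w ∈ cellOf w := fun _ => mem_cell1Of _

lemma cell_eq_cellOf {ℓ : ℕ} {C : Set (Fin ℓ → ℝ)} (hC : Cell C) {w : Fin ℓ → ℝ}
    (hw : w ∈ C) : C = cellOf w := by
  obtain ⟨c, hc, rfl⟩ := hC
  have h : ∀ j, c j = cell1Of (w j) := fun j => cell1_eq_of_mem (hc j) (hw j)
  ext x
  simp only [cellOf, Set.mem_setOf_eq]
  exact ⟨fun hx j => (h j) ▸ hx j, fun hx j => (h j).symm ▸ hx j⟩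

lemma cell1_nonempty {A : Set ℝ} (hA : Cell1 A) : A.Nonempty := by
  obtain ⟨k, hk | hk⟩ := hA
  · exact ⟨k, hk ▸ rfl⟩
  · exact hk ▸ ⟨k + 2⁻¹, by constructor <;> norm_num⟩

lemma cell_nonempty {ℓ : ℕ} {C : Set (Fin ℓ → ℝ)} (hC : Cell C) : C.Nonempty := by
  obtain ⟨c, hc, rfl⟩ := hC
  exact ⟨fun i => (cell1_nonempty (hc i)).some, fun i => (cell1_nonempty (hc i)).some_mem⟩

lemma mem_cell1Of_symm {r s : ℝ} (h : s ∈ cell1Of r) : cell1Of r = cell1Of s :=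
  cell1_eq_of_mem (cell1_cell1Of r) h

/-- A fort is a union of integer cells: the cell of any of its points is contained in it. -/
lemma fort_cell_subset {ℓ : ℕ} {F : Set (Fin ℓ → ℝ)} (hF : Fort ℓ F) :
    ∀ w ∈ F, ∀ x ∈ cellOf w, x ∈ F := by
  induction hF with
  | base n hn =>
    intro w hw x hx
    have hx0 : x 0 ∈ cell1Of (w 0) := hx 0
    have hw0 : w 0 ∈ Set.Ioo (0 : ℝ) (n : ℝ) := hw
    show x 0 ∈ Set.Ioo (0 : ℝ) (n : ℝ)
    unfold cell1Of at hx0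
    split at hx0
    · rw [Set.mem_singleton_iff] at hx0; rw [hx0]; exact hw0
    · refine ⟨lt_of_le_of_lt ?_ hx0.1, lt_of_lt_of_le hx0.2 ?_⟩
      · exact_mod_cast Int.le_floor.mpr (by exact_mod_cast hw0.1.le)
      · have h1 : ⌊w 0⌋ < (n : ℤ) := Int.floor_lt.mpr (by exact_mod_cast hw0.2)
        have : (⌊w 0⌋ : ℝ) + 1 ≤ ((n : ℤ) : ℝ) := by exact_mod_cast h1
        exact_mod_cast this
  | step F1 s hF1 hs ih1 ih =>
    intro w hw x hx
    obtain ⟨C, hC, h0, ht⟩ := hw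
    have hCeq : C = cellOf (fun _ : Fin 1 => w 0) := cell_eq_cellOf hC.1 h0
    refine ⟨C, hC, ?_, ?_⟩
    · rw [hCeq]
      intro j
      exact hx 0
    · exact ih C hC _ ht (Fin.tail x) (fun j => hx j.succ)

lemma cellOf_mem_cellsOf {ℓ : ℕ} {F : Set (Fin ℓ → ℝ)} (hF : Fort ℓ F) {w : Fin ℓ → ℝ}
    (hw : w ∈ F) : cellOf w ∈ cellsOf F :=
  ⟨cell_cellOf w, fun x hx => fort_cell_subset hF w hw x hx⟩

/-! ### glue / proj / tailpart identities -/

lemma glue_lt {ℓ i : ℕ} (h : i ≤ ℓ) (x : Fin i → ℝ) (y : Fin (ℓ - i) → ℝ) (j : Fin ℓ)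
    (hj : (j : ℕ) < i) : glue h x y j = x ⟨(j : ℕ), hj⟩ := dif_pos hj

lemma glue_ge {ℓ i : ℕ} (h : i ≤ ℓ) (x : Fin i → ℝ) (y : Fin (ℓ - i) → ℝ) (j : Fin ℓ)
    (hj : ¬ (j : ℕ) < i) : glue h x y j = y ⟨(j : ℕ) - i, by have := j.2; omega⟩ :=
  dif_neg hj

lemma proj_glue {ℓ i : ℕ} (h : i ≤ ℓ) (x : Fin i → ℝ) (y : Fin (ℓ - i) → ℝ) :
    proj i h (glue h x y) = x := by
  funext j
  show glue h x y (Fin.castLE h j) = x j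
  rw [glue_lt h x y _ (by simpa using j.2)]
  exact congrArg x (Fin.ext rfl)

lemma tailpart_glue {ℓ i : ℕ} (h : i ≤ ℓ) (x : Fin i → ℝ) (y : Fin (ℓ - i) → ℝ) :
    tailpart h (glue h x y) = y := by
  funext j
  have h1 : tailpart h (glue h x y) j
      = glue h x y ⟨i + (j : ℕ), by have := j.2; omega⟩ := rfl
  rw [h1, glue_ge h x y _ (show ¬ i + (j : ℕ) < i by omega)]
  congr 1
  exact Fin.ext (show i + (j : ℕ) - i = (j : ℕ) by omega)

lemma glue_proj_tailpart {ℓ i : ℕ} (h : i ≤ ℓ) (x : Fin ℓ → ℝ) :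
    glue h (proj i h x) (tailpart h x) = x := by
  funext j
  by_cases hj : (j : ℕ) < i
  · rw [glue_lt h _ _ j hj]
    exact congrArg x (Fin.ext rfl)
  · rw [glue_ge h _ _ j hj]
    have h1 : tailpart h x ⟨(j : ℕ) - i, by have := j.2; omega⟩
        = x ⟨i + ((j : ℕ) - i), by have := j.2; omega⟩ := rfl
    rw [h1]
    congr 1
    exact Fin.ext (show i + ((j : ℕ) - i) = (j : ℕ) by omega)

lemma proj_eq_iff {ℓ i : ℕ} (h : i ≤ ℓ) {x y : Fin ℓ → ℝ} :
    proj i h x = proj i h y ↔ ∀ j : Fin ℓ, (j : ℕ) < i → x j = y j := by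
  constructor
  · intro he j hj
    have := congrFun he ⟨(j : ℕ), hj⟩
    simpa [proj, Fin.castLE, Fin.ext_iff] using this
  · intro he
    funext j
    exact he (Fin.castLE h j) (by simpa using j.2)

/-! ### Precellular prefix lemmas -/

lemma precellular_prefix_eq {ℓ : ℕ} {F : Set (Fin ℓ → ℝ)} {φ : (Fin ℓ → ℝ) → (Fin ℓ → ℝ)}
    (hp : Precellular F φ) {x y : Fin ℓ → ℝ} (hx : x ∈ F) (hy : y ∈ F) {i : ℕ}
    (hxy : ∀ k : Fin ℓ, (k : ℕ) < i → x k = y k) :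
    ∀ j : Fin ℓ, (j : ℕ) < i → φ x j = φ y j := by
  intro j hj
  exact hp.1 j x hx y hy (fun k hk => hxy k (lt_of_le_of_lt (by exact_mod_cast hk) hj))

lemma precellular_prefix_inj {ℓ : ℕ} {F : Set (Fin ℓ → ℝ)} {φ : (Fin ℓ → ℝ) → (Fin ℓ → ℝ)}
    (hp : Precellular F φ) {x y : Fin ℓ → ℝ} (hx : x ∈ F) (hy : y ∈ F) {i : ℕ}
    (hxy : ∀ k : Fin ℓ, (k : ℕ) < i → φ x k = φ y k) :
    ∀ j : Fin ℓ, (j : ℕ) < i → x j = y j := by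
  have key : ∀ n : ℕ, ∀ j : Fin ℓ, (j : ℕ) = n → (j : ℕ) < i → x j = y j := by
    intro n
    induction n using Nat.strong_induction_on with
    | _ n IH =>
      intro j hjn hji
      have hagree : ∀ k : Fin ℓ, k < j → x k = y k := by
        intro k hk
        have hkj : (k : ℕ) < (j : ℕ) := hk
        exact IH (k : ℕ) (by omega) k rfl (by omega)
      by_contra hne
      rcases lt_or_gt_of_ne hne with hlt | hgt
      · exact absurd (hxy j hji) (ne_of_lt (hp.2 j x hx y hy hagree hlt))
      · exact absurd (hxy j hji) (ne_of_gt (hp.2 j y hy x hx (fun k hk => (hagree k hk).symm) hgt))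
  exact fun j hj => key (j : ℕ) j rfl hj

/-! ### Continuity -/

lemma continuous_glue {ℓ i : ℕ} (h : i ≤ ℓ) (x : Fin i → ℝ) :
    Continuous (fun y : Fin (ℓ - i) → ℝ => glue h x y) := by
  refine continuous_pi fun j => ?_
  by_cases hj : (j : ℕ) < i
  · simp only [glue, dif_pos hj]
    exact continuous_const
  · simp only [glue, dif_neg hj]
    exact continuous_apply _

lemma continuous_tailpart {ℓ i : ℕ} (h : i ≤ ℓ) : Continuous (tailpart (ℓ := ℓ) h) :=
  continuous_pi fun _ => continuous_apply _

/-! ### Main auxiliary lemmas -/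

lemma glue_mem_cellOf {ℓ i : ℕ} (h : i ≤ ℓ) {z z'' : Fin ℓ → ℝ}
    (hc : ∀ k : Fin ℓ, (k : ℕ) < i → cell1Of (z k) = cell1Of (z'' k))
    {y y' : Fin (ℓ - i) → ℝ} (hy : y' ∈ cellOf y) :
    glue h (proj i h z'') y' ∈ cellOf (glue h (proj i h z) y) := by
  intro k
  by_cases hk : (k : ℕ) < i
  · rw [glue_lt h _ _ k hk, glue_lt h _ _ k hk]
    show z'' (Fin.castLE h ⟨_, hk⟩) ∈ cell1Of (z (Fin.castLE h ⟨_, hk⟩))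
    have e : Fin.castLE h (⟨(k : ℕ), hk⟩ : Fin i) = k := Fin.ext rfl
    rw [e, hc k hk]
    exact mem_cell1Of _
  · rw [glue_ge h _ _ k hk, glue_ge h _ _ k hk]
    exact hy _

lemma fiber_congr {ℓ i : ℕ} (h : i ≤ ℓ) {F : Set (Fin ℓ → ℝ)} (hF : Fort ℓ F)
    {z z' : Fin ℓ → ℝ}
    (hc : ∀ k : Fin ℓ, (k : ℕ) < i → cell1Of (z k) = cell1Of (z' k)) :
    fiber h F (proj i h z) = fiber h F (proj i h z') := by
  have key : ∀ (a b : Fin ℓ → ℝ),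
      (∀ k : Fin ℓ, (k : ℕ) < i → cell1Of (a k) = cell1Of (b k)) →
      fiber h F (proj i h a) ⊆ fiber h F (proj i h b) := by
    intro a b hab y hy
    exact fort_cell_subset hF _ hy _ (glue_mem_cellOf h hab (mem_cellOf y))
  exact le_antisymm (key z z' hc) (key z' z (fun k hk => (hc k hk).symm))

lemma tailcell_subset_fiber {ℓ i : ℕ} (h : i ≤ ℓ) {G : Set (Fin ℓ → ℝ)} (hG : Fort ℓ G)
    {g : Fin ℓ → ℝ} (hg : g ∈ G) :
    cellOf (tailpart h g) ⊆ fiber h G (proj i h g) := by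
  intro u hu
  refine fort_cell_subset hG g hg _ ?_
  intro k
  by_cases hk : (k : ℕ) < i
  · rw [glue_lt h _ _ k hk]
    have e : Fin.castLE h (⟨(k : ℕ), hk⟩ : Fin i) = k := Fin.ext rfl
    show g (Fin.castLE h ⟨(k : ℕ), hk⟩) ∈ cell1Of (g k)
    rw [e]
    exact mem_cell1Of _
  · rw [glue_ge h _ _ k hk]
    have h2 : (⟨i + ((k : ℕ) - i), by have := k.2; omega⟩ : Fin ℓ) = k :=
      Fin.ext (show i + ((k : ℕ) - i) = (k : ℕ) by omega)
    have hgk : g k = tailpart h g ⟨(k : ℕ) - i, by have := k.2; omega⟩ :=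
      (congrArg g h2).symm
    rw [hgk]
    exact hu _

lemma proj_phi_glue {ℓ i : ℕ} (h : i ≤ ℓ) {F : Set (Fin ℓ → ℝ)}
    {φ : (Fin ℓ → ℝ) → (Fin ℓ → ℝ)} (hpre : Precellular F φ) {z : Fin ℓ → ℝ} (hz : z ∈ F)
    {y : Fin (ℓ - i) → ℝ} (hyF : glue h (proj i h z) y ∈ F) :
    proj i h (φ (glue h (proj i h z) y)) = proj i h (φ z) := by
  rw [proj_eq_iff]
  refine precellular_prefix_eq hpre hyF hz ?_
  intro k hk
  rw [glue_lt h _ _ k hk]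
  exact congrArg z (Fin.ext rfl)

lemma fiber_morphism {ℓ i : ℕ} (h : i ≤ ℓ)
    {F G : Set (Fin ℓ → ℝ)} (hF : Fort ℓ F) (hG : Fort ℓ G)
    {φ : (Fin ℓ → ℝ) → (Fin ℓ → ℝ)} (hφ : Morphism F G φ) {z : Fin ℓ → ℝ} (hz : z ∈ F) :
    Morphism (fiber h F (proj i h z)) (fiber h G (proj i h (φ z)))
      (fun y => tailpart h (φ (glue h (proj i h z) y))) := by
  obtain ⟨hsurj, hpre, hcells⟩ := hφ
  have hmemF : ∀ y ∈ fiber h F (proj i h z), glue h (proj i h z) y ∈ F := fun y hy => hy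
  refine ⟨?_, ⟨?_, ?_⟩, ?_⟩
  · -- image equals target fiber
    ext u
    constructor
    · rintro ⟨y, hy, rfl⟩
      show glue h (proj i h (φ z)) (tailpart h (φ (glue h (proj i h z) y))) ∈ G
      rw [← proj_phi_glue h hpre hz (hmemF y hy), glue_proj_tailpart, ← hsurj]
      exact ⟨_, hmemF y hy, rfl⟩
    · intro hu
      have hmem : glue h (proj i h (φ z)) u ∈ G := hu
      rw [← hsurj] at hmem
      obtain ⟨w, hw, hwu⟩ := hmem
      have hpw : ∀ k : Fin ℓ, (k : ℕ) < i → w k = z k := by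
        refine precellular_prefix_inj hpre hw hz ?_
        intro k hk
        have hk' := congrFun hwu k
        rw [hk', glue_lt h _ _ k hk]
        exact congrArg (φ z) (Fin.ext rfl)
      have hzw : proj i h z = proj i h w := (proj_eq_iff h).mpr (fun k hk => (hpw k hk).symm)
      refine ⟨tailpart h w, ?_, ?_⟩
      · show glue h (proj i h z) (tailpart h w) ∈ F
        rw [hzw, glue_proj_tailpart]
        exact hw
      · show tailpart h (φ (glue h (proj i h z) (tailpart h w))) = u
        rw [hzw, glue_proj_tailpart, hwu, tailpart_glue]
  · -- precellular: dependence on first coordinates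
    intro j y hy y' hy' hagree
    refine hpre.1 ⟨i + (j : ℕ), by have := j.2; omega⟩ _ (hmemF y hy) _ (hmemF y' hy') ?_
    intro k hk
    by_cases hki : (k : ℕ) < i
    · rw [glue_lt h _ _ k hki, glue_lt h _ _ k hki]
    · rw [glue_ge h _ _ k hki, glue_ge h _ _ k hki]
      have hkv : (k : ℕ) ≤ i + (j : ℕ) := hk
      exact hagree ⟨(k : ℕ) - i, by have := k.2; omega⟩ (Fin.le_def.mpr (by simp; omega))
  · -- precellular: strict monotonicity
    intro j y hy y' hy' hagree hlt
    refine hpre.2 ⟨i + (j : ℕ), by have := j.2; omega⟩ _ (hmemF y hy) _ (hmemF y' hy') ?_ ?_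
    · intro k hk
      by_cases hki : (k : ℕ) < i
      · rw [glue_lt h _ _ k hki, glue_lt h _ _ k hki]
      · rw [glue_ge h _ _ k hki, glue_ge h _ _ k hki]
        have hkv : (k : ℕ) < i + (j : ℕ) := hk
        exact hagree ⟨(k : ℕ) - i, by have := k.2; omega⟩ (Fin.lt_def.mpr (by simp; omega))
    · rw [glue_ge h _ _ _ (show ¬ i + (j : ℕ) < i by omega),
          glue_ge h _ _ _ (show ¬ i + (j : ℕ) < i by omega)]
      have e : (⟨i + (j : ℕ) - i, by have := j.2; omega⟩ : Fin (ℓ - i)) = j :=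
        Fin.ext (show i + (j : ℕ) - i = (j : ℕ) by omega)
      rw [e]
      exact hlt
  · -- cells map into cells, continuity
    intro D hD
    obtain ⟨hDcell, hDsub⟩ := hD
    obtain ⟨y, hyD⟩ := cell_nonempty hDcell
    have hDeq : D = cellOf y := cell_eq_cellOf hDcell hyD
    have hwF : glue h (proj i h z) y ∈ F := hDsub hyD
    have hmaps : ∀ y' ∈ D, glue h (proj i h z) y' ∈ cellOf (glue h (proj i h z) y) := by
      intro y' hy'
      exact glue_mem_cellOf h (fun _ _ => rfl) (hDeq ▸ hy')
    obtain ⟨⟨C₂, hC₂, hφsub⟩, hcont⟩ := hcells _ (cellOf_mem_cellsOf hF hwF)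
    have hgC : φ (glue h (proj i h z) y) ∈ C₂ := hφsub ⟨_, mem_cellOf _, rfl⟩
    have hC₂eq : C₂ = cellOf (φ (glue h (proj i h z) y)) := cell_eq_cellOf hC₂.1 hgC
    have hφwG : φ (glue h (proj i h z) y) ∈ G := hC₂.2 hgC
    refine ⟨⟨cellOf (tailpart h (φ (glue h (proj i h z) y))), ⟨cell_cellOf _, ?_⟩, ?_⟩, ?_⟩
    · rw [← proj_phi_glue h hpre hz hwF]
      exact tailcell_subset_fiber h hG hφwG
    · rintro u ⟨y', hy', rfl⟩
      intro j
      have hmem : φ (glue h (proj i h z) y') ∈ cellOf (φ (glue h (proj i h z) y)) :=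
        hC₂eq ▸ hφsub ⟨_, hmaps y' hy', rfl⟩
      exact hmem _
    · have hc1 : ContinuousOn (φ ∘ fun y' => glue h (proj i h z) y') D :=
        hcont.comp (continuous_glue h _).continuousOn (fun y' hy' => hmaps y' hy')
      exact (continuous_tailpart h).comp_continuousOn hc1

lemma fiber_combEquiv {ℓ i : ℕ} (h : i ≤ ℓ)
    {F G : Set (Fin ℓ → ℝ)} (hF : Fort ℓ F) (hG : Fort ℓ G)
    {φ : (Fin ℓ → ℝ) → (Fin ℓ → ℝ)} (hφ : Morphism F G φ) {z z' : Fin ℓ → ℝ}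
    (hz : z ∈ F)
    (hc : ∀ k : Fin ℓ, (k : ℕ) < i → cell1Of (z k) = cell1Of (z' k)) :
    CombEquiv (fiber h F (proj i h z)) (fiber h G (proj i h (φ z)))
      (fun y => tailpart h (φ (glue h (proj i h z) y)))
      (fun y => tailpart h (φ (glue h (proj i h z') y))) := by
  obtain ⟨hsurj, hpre, hcells⟩ := hφ
  intro D hD
  obtain ⟨hDcell, hDsub⟩ := hD
  obtain ⟨y, hyD⟩ := cell_nonempty hDcell
  have hDeq : D = cellOf y := cell_eq_cellOf hDcell hyD
  have hwF : glue h (proj i h z) y ∈ F := hDsub hyD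
  obtain ⟨⟨C₂, hC₂, hφsub⟩, hcont⟩ := hcells _ (cellOf_mem_cellsOf hF hwF)
  have hgC : φ (glue h (proj i h z) y) ∈ C₂ := hφsub ⟨_, mem_cellOf _, rfl⟩
  have hC₂eq : C₂ = cellOf (φ (glue h (proj i h z) y)) := cell_eq_cellOf hC₂.1 hgC
  have hφwG : φ (glue h (proj i h z) y) ∈ G := hC₂.2 hgC
  refine ⟨cellOf (tailpart h (φ (glue h (proj i h z) y))), ⟨cell_cellOf _, ?_⟩, ?_, ?_⟩
  · rw [← proj_phi_glue h hpre hz hwF]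
    exact tailcell_subset_fiber h hG hφwG
  · rintro u ⟨y', hy', rfl⟩
    intro j
    have hmem : φ (glue h (proj i h z) y') ∈ cellOf (φ (glue h (proj i h z) y)) :=
      hC₂eq ▸ hφsub ⟨_, glue_mem_cellOf h (fun _ _ => rfl) (hDeq ▸ hy'), rfl⟩
    exact hmem _
  · rintro u ⟨y', hy', rfl⟩
    intro j
    have hmem : φ (glue h (proj i h z') y') ∈ cellOf (φ (glue h (proj i h z) y)) :=
      hC₂eq ▸ hφsub ⟨_, glue_mem_cellOf h hc (hDeq ▸ hy'), rfl⟩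
    exact hmem _

/-- Fiber morphisms of a morphism `φ : ℱ → 𝒢` over two points of the same integer cell `𝒞`
of `π_i(ℱ)` are morphisms between the same pair of forts and are combinatorially
equivalent. -/
theorem fiber_morphisms_combEquiv {ℓ i : ℕ} (h1 : 1 ≤ i) (h2 : i < ℓ)
    (F G : Set (Fin ℓ → ℝ)) (hF : Fort ℓ F) (hG : Fort ℓ G)
    (φ : (Fin ℓ → ℝ) → (Fin ℓ → ℝ)) (hφ : Morphism F G φ)
    (C : Set (Fin i → ℝ)) (hC : C ∈ cellsOf (proj i h2.le '' F))
    (z z' : Fin ℓ → ℝ) (hz : z ∈ F) (hz' : z' ∈ F)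
    (hzC : proj i h2.le z ∈ C) (hz'C : proj i h2.le z' ∈ C) :
    fiber h2.le F (proj i h2.le z) = fiber h2.le F (proj i h2.le z') ∧
    fiber h2.le G (proj i h2.le (φ z)) = fiber h2.le G (proj i h2.le (φ z')) ∧
    Morphism (fiber h2.le F (proj i h2.le z)) (fiber h2.le G (proj i h2.le (φ z)))
      (fun y => tailpart h2.le (φ (glue h2.le (proj i h2.le z) y))) ∧
    Morphism (fiber h2.le F (proj i h2.le z')) (fiber h2.le G (proj i h2.le (φ z')))
      (fun y => tailpart h2.le (φ (glue h2.le (proj i h2.le z') y))) ∧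
    CombEquiv (fiber h2.le F (proj i h2.le z)) (fiber h2.le G (proj i h2.le (φ z)))
      (fun y => tailpart h2.le (φ (glue h2.le (proj i h2.le z) y)))
      (fun y => tailpart h2.le (φ (glue h2.le (proj i h2.le z') y))) := by
  have h_same : ∀ k : Fin ℓ, (k : ℕ) < i → cell1Of (z k) = cell1Of (z' k) := by
    intro k hk
    have hCe : C = cellOf (proj i h2.le z) := cell_eq_cellOf hC.1 hzC
    have h1 : proj i h2.le z' ⟨(k : ℕ), hk⟩ ∈ cell1Of (proj i h2.le z ⟨(k : ℕ), hk⟩) :=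
      (hCe ▸ hz'C) _
    have e : Fin.castLE h2.le (⟨(k : ℕ), hk⟩ : Fin i) = k := Fin.ext rfl
    rw [show proj i h2.le z' ⟨(k : ℕ), hk⟩ = z' k from congrArg z' e,
        show proj i h2.le z ⟨(k : ℕ), hk⟩ = z k from congrArg z e] at h1
    exact mem_cell1Of_symm h1
  have h_sameG : ∀ k : Fin ℓ, (k : ℕ) < i → cell1Of (φ z k) = cell1Of (φ z' k) := by
    intro k hk
    obtain ⟨hsurj, hpre, hcells⟩ := hφ
    have hz''cell : glue h2.le (proj i h2.le z') (tailpart h2.le z) ∈ cellOf z := by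
      have hg := glue_mem_cellOf h2.le h_same (mem_cellOf (tailpart h2.le z))
      rwa [glue_proj_tailpart] at hg
    have hz''F : glue h2.le (proj i h2.le z') (tailpart h2.le z) ∈ F :=
      fort_cell_subset hF z hz _ hz''cell
    obtain ⟨⟨C₂, hC₂, hφsub⟩, -⟩ := hcells _ (cellOf_mem_cellsOf hF hz)
    have h1 : φ z ∈ C₂ := hφsub ⟨z, mem_cellOf z, rfl⟩
    have h2' : φ (glue h2.le (proj i h2.le z') (tailpart h2.le z)) ∈ C₂ :=
      hφsub ⟨_, hz''cell, rfl⟩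
    have hC₂eq : C₂ = cellOf (φ z) := cell_eq_cellOf hC₂.1 h1
    have h3 : φ (glue h2.le (proj i h2.le z') (tailpart h2.le z)) k ∈ cell1Of (φ z k) :=
      (hC₂eq ▸ h2') k
    have h4 : φ (glue h2.le (proj i h2.le z') (tailpart h2.le z)) k = φ z' k := by
      refine precellular_prefix_eq hpre hz''F hz' ?_ k hk
      intro m hm
      rw [glue_lt h2.le _ _ m hm]
      exact congrArg z' (Fin.ext rfl)
    rw [h4] at h3
    exact mem_cell1Of_symm h3
  exact ⟨fiber_congr h2.le hF h_same, fiber_congr h2.le hG h_sameG,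
    fiber_morphism h2.le hF hG hφ hz, fiber_morphism h2.le hF hG hφ hz',
    fiber_combEquiv h2.le hF hG hφ hz h_same⟩

end Forts
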